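/- arXiv:2211.00880 — 2 statements merged into one kernel-verified Lean document; each statement's English description precedes it below -/
import Mathlib

section
/- Let T be a finite tree with n ≥ 2 vertices in which there exists a vertex v̄ such that all leaves of T are at distance either r or r+1 from v̄ for some r (i.e., any two leaves have depths from v̄ differing by at most 1). Then v̄ is a vertex minimizing the eccentricity of T, i.e., v̄ is a center of T. -/
/-- A leaf of a graph is a vertex with exactly one neighbor. -/
def IsLeaf {V : Type*} (G : SimpleGraph V) (v : V) : Prop :=
  (G.neighborSet v).ncard = 1

/-- The eccentricity of a vertex: the maximum distance to any other vertex. -/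
noncomputable def eccent {V : Type*} (G : SimpleGraph V) (v : V) : ℕ :=
  sSup (Set.range fun u => G.dist v u)

section Helpers

open SimpleGraph

variable {V : Type*} {T : SimpleGraph V}

/-- Along any walk, the distances to an intermediate vertex add up subadditively. -/
private lemma dist_add_dist_le_of_mem_support {v a x : V} (p : T.Walk v a)
    (hx : x ∈ p.support) : T.dist v x + T.dist x a ≤ p.length := by
  classical
  have h1 : T.dist v x ≤ (p.takeUntil x hx).length := SimpleGraph.dist_le _
  have h2 : T.dist x a ≤ (p.dropUntil x hx).length := SimpleGraph.dist_le _
  have hs := p.take_spec hx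
  have hlen : (p.takeUntil x hx).length + (p.dropUntil x hx).length = p.length := by
    rw [← SimpleGraph.Walk.length_append, hs]
  omega

private lemma isPath_concat {v a l : V} {p : T.Walk v a} (hp : p.IsPath)
    (h : T.Adj a l) (hl : l ∉ p.support) : (p.concat h).IsPath := by
  rw [← SimpleGraph.Walk.isPath_reverse_iff, SimpleGraph.Walk.reverse_concat]
  exact hp.reverse.cons (by simpa [SimpleGraph.Walk.support_reverse] using hl)

/-- In a tree, a neighbor's distance to a base vertex differs by exactly one. -/
private lemma step (hT : T.IsTree) (v : V) {l w : V} (h : T.Adj l w) :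
    T.dist v w + 1 = T.dist v l ∨ T.dist v w = T.dist v l + 1 := by
  obtain ⟨P, hP, hPlen⟩ := hT.isConnected.exists_path_of_dist v l
  obtain ⟨Q, hQ, hQlen⟩ := hT.isConnected.exists_path_of_dist v w
  have hdlw : T.dist l w = 1 := SimpleGraph.dist_eq_one_iff_adj.mpr h
  have hdwl : T.dist w l = 1 := SimpleGraph.dist_eq_one_iff_adj.mpr h.symm
  rcases le_or_gt (T.dist v w) (T.dist v l) with hle | hlt
  · left
    have hlQ : l ∉ Q.support := by
      intro hmem
      have := dist_add_dist_le_of_mem_support Q hmem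
      omega
    have hQ' : (Q.concat h.symm).IsPath := isPath_concat hQ h.symm hlQ
    obtain ⟨P0, _, hun⟩ := hT.existsUnique_path v l
    have e1 : Q.concat h.symm = P0 := hun _ hQ'
    have e2 : P = P0 := hun _ hP
    have : (Q.concat h.symm).length = P.length := by rw [e1, e2]
    rw [SimpleGraph.Walk.length_concat] at this
    omega
  · right
    have hwP : w ∉ P.support := by
      intro hmem
      have := dist_add_dist_le_of_mem_support P hmem
      omega
    have hP' : (P.concat h).IsPath := isPath_concat hP h hwP
    obtain ⟨Q0, _, hun⟩ := hT.existsUnique_path v w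
    have e1 : P.concat h = Q0 := hun _ hP'
    have e2 : Q = Q0 := hun _ hQ
    have : (P.concat h).length = Q.length := by rw [e1, e2]
    rw [SimpleGraph.Walk.length_concat] at this
    omega

/-- In a tree, the neighbor of `l` that is one step closer to `v` is unique. -/
private lemma pred_unique (hT : T.IsTree) {v l a b : V} (ha : T.Adj a l) (hb : T.Adj b l)
    (hda : T.dist v a + 1 = T.dist v l) (hdb : T.dist v b + 1 = T.dist v l) : a = b := by
  obtain ⟨Qa, hQa, hQalen⟩ := hT.isConnected.exists_path_of_dist v a
  obtain ⟨Qb, hQb, hQblen⟩ := hT.isConnected.exists_path_of_dist v b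
  have hdla : T.dist l a = 1 := SimpleGraph.dist_eq_one_iff_adj.mpr ha.symm
  have hdlb : T.dist l b = 1 := SimpleGraph.dist_eq_one_iff_adj.mpr hb.symm
  have hla : l ∉ Qa.support := by
    intro hmem
    have := dist_add_dist_le_of_mem_support Qa hmem
    omega
  have hlb : l ∉ Qb.support := by
    intro hmem
    have := dist_add_dist_le_of_mem_support Qb hmem
    omega
  have hPa : (Qa.concat ha).IsPath := isPath_concat hQa ha hla
  have hPb : (Qb.concat hb).IsPath := isPath_concat hQb hb hlb
  obtain ⟨P0, _, hun⟩ := hT.existsUnique_path v l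
  have heq : Qa.concat ha = Qb.concat hb := by rw [hun _ hPa, hun _ hPb]
  have hsup := congrArg (fun w : T.Walk v l => w.reverse.support) heq
  simp only [SimpleGraph.Walk.reverse_concat, SimpleGraph.Walk.support_cons] at hsup
  rw [Qa.reverse.support_eq_cons, Qb.reverse.support_eq_cons] at hsup
  simp only [List.cons.injEq] at hsup
  exact hsup.2.1

/-- In a connected graph, every vertex distinct from `v` has a neighbor one step
closer to `v`. -/
private lemma exists_pred (hT : T.IsTree) {v l : V} (h : v ≠ l) :
    ∃ p, T.Adj p l ∧ T.dist v p + 1 = T.dist v l := by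
  obtain ⟨P, hP, hPlen⟩ := hT.isConnected.exists_path_of_dist v l
  have hn : ¬ P.reverse.Nil := by
    rw [SimpleGraph.Walk.not_nil_iff_lt_length, SimpleGraph.Walk.length_reverse, hPlen]
    exact hT.isConnected.pos_dist_of_ne h
  obtain ⟨p, hadj, q, hq⟩ := SimpleGraph.Walk.not_nil_iff.mp hn
  have hlen : q.length + 1 = T.dist v l := by
    have := congrArg SimpleGraph.Walk.length hq
    rw [SimpleGraph.Walk.length_reverse, hPlen, SimpleGraph.Walk.length_cons] at this
    omega
  have h1 : T.dist v p ≤ q.length := by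
    have := SimpleGraph.dist_le q.reverse
    rwa [SimpleGraph.Walk.length_reverse] at this
  have h2 : T.dist v l ≤ T.dist v p + 1 := by
    have htri := hT.isConnected.dist_triangle (u := v) (v := p) (w := l)
    have : T.dist p l = 1 := SimpleGraph.dist_eq_one_iff_adj.mpr hadj.symm
    omega
  exact ⟨p, hadj.symm, by omega⟩

variable [Fintype V]

private lemma dist_le_eccent (v u : V) : T.dist v u ≤ _root_.eccent T v :=
  le_csSup (Set.finite_range _).bddAbove (Set.mem_range_self u)

private lemma exists_eccent [Nonempty V] (v : V) : ∃ u, _root_.eccent T v = T.dist v u := by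
  have h := (Set.range_nonempty (fun u => T.dist v u)).csSup_mem
    (Set.finite_range fun u => T.dist v u)
  obtain ⟨u, hu⟩ := h
  exact ⟨u, hu.symm⟩

/-- In a finite tree with at least two vertices, some farthest vertex from `v`
is a leaf. -/
private lemma exists_leaf_eccent (hT : T.IsTree) (hn : 2 ≤ Fintype.card V) (v : V) :
    ∃ l, IsLeaf T l ∧ T.dist v l = _root_.eccent T v := by
  have hnt : Nontrivial V := Fintype.one_lt_card_iff_nontrivial.mp (by omega)
  obtain ⟨l, hl⟩ := exists_eccent (T := T) v
  obtain ⟨w, hw⟩ := exists_ne v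
  have hpos : 1 ≤ _root_.eccent T v :=
    le_trans (hT.isConnected.pos_dist_of_ne hw.symm) (dist_le_eccent v w)
  have hlv : v ≠ l := by
    intro e
    rw [← e, SimpleGraph.dist_self] at hl
    omega
  obtain ⟨p, hpadj, hpd⟩ := exists_pred hT hlv
  have hset : T.neighborSet l = {p} := by
    ext w'
    simp only [SimpleGraph.mem_neighborSet, Set.mem_singleton_iff]
    constructor
    · intro hw'
      rcases step hT v hw' with h1 | h2
      · exact pred_unique hT hw'.symm hpadj h1 hpd
      · exfalso
        have := dist_le_eccent (T := T) v w'
        omega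
    · rintro rfl
      exact hpadj.symm
  exact ⟨l, by rw [IsLeaf, hset, Set.ncard_singleton], hl.symm⟩

end Helpers

/-- Let `T` be a finite tree with `n ≥ 2` vertices containing a vertex `v̄` such that all
leaves of `T` are at distance `r` or `r+1` from `v̄` for some `r`.  Then `v̄` minimizes the
eccentricity, i.e. `v̄` is a center of `T`. -/
theorem balanced_vertex_is_center {V : Type*} [Fintype V]
    (T : SimpleGraph V) (hT : T.IsTree) (hn : 2 ≤ Fintype.card V) (vbar : V)
    (hbal : ∃ r : ℕ, ∀ l : V, IsLeaf T l → T.dist vbar l = r ∨ T.dist vbar l = r + 1) :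
    ∀ u : V, eccent T vbar ≤ eccent T u := by
  classical
  obtain ⟨r, hbal⟩ := hbal
  have hnt : Nontrivial V := Fintype.one_lt_card_iff_nontrivial.mp (by omega)
  -- the eccentricity of vbar is attained at a leaf, hence it is at most r+1
  obtain ⟨l₀, hl₀leaf, hl₀⟩ := exists_leaf_eccent hT hn vbar
  have he_le : eccent T vbar ≤ r + 1 := by
    rcases hbal l₀ hl₀leaf with h | h <;> omega
  intro u
  by_cases huv : u = vbar
  · subst huv; exact le_refl _
  -- eccent u ≥ 1
  have hu1 : 1 ≤ eccent T u := by
    obtain ⟨w, hw⟩ := exists_ne u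
    exact le_trans (hT.isConnected.pos_dist_of_ne hw.symm) (dist_le_eccent u w)
  -- c : the neighbor of vbar towards u
  obtain ⟨c, hcadj, hcd⟩ := exists_pred hT huv
  by_cases hleaf : ∀ w, T.Adj w vbar → w = c
  · -- vbar is a leaf, so r = 0
    have hvleaf : IsLeaf T vbar := by
      have hset : T.neighborSet vbar = {c} := by
        ext w'
        simp only [SimpleGraph.mem_neighborSet, Set.mem_singleton_iff]
        exact ⟨fun h => hleaf w' h.symm, fun h => h ▸ hcadj.symm⟩
      rw [IsLeaf, hset, Set.ncard_singleton]
    have hr0 : r = 0 := by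
      rcases hbal vbar hvleaf with h | h <;>
        simp [SimpleGraph.dist_self] at h <;> omega
    omega
  · -- vbar has a neighbor c' not towards u; find a leaf in that branch
    push_neg at hleaf
    obtain ⟨c', hc'adj, hc'ne⟩ := hleaf
    have hc'S : T.dist u c' = T.dist u vbar + T.dist vbar c' := by
      rcases step hT u hc'adj.symm with h1 | h2
      · exact absurd (pred_unique hT hc'adj hcadj h1 hcd) hc'ne
      · rw [SimpleGraph.dist_eq_one_iff_adj.mpr hc'adj.symm]
        omega
    -- maximize dist vbar over the far branch S
    set S : Finset V :=
      Finset.univ.filter (fun x => T.dist u x = T.dist u vbar + T.dist vbar x) with hS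
    have hc'mem : c' ∈ S := by simp [hS, hc'S]
    obtain ⟨l, hlS, hlmax⟩ := S.exists_max_image (fun x => T.dist vbar x) ⟨c', hc'mem⟩
    have hlS' : T.dist u l = T.dist u vbar + T.dist vbar l := by
      simpa [hS] using hlS
    have hl1 : 1 ≤ T.dist vbar l := by
      have := hlmax c' hc'mem
      rw [SimpleGraph.dist_eq_one_iff_adj.mpr hc'adj.symm] at this
      omega
    have hlvbar : vbar ≠ l := by
      intro e; rw [← e, SimpleGraph.dist_self] at hl1; omega
    obtain ⟨p, hpadj, hpd⟩ := exists_pred hT hlvbar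
    have hpu : T.dist u p + 1 = T.dist u l := by
      rcases step hT u hpadj.symm with h1 | h2
      · exact h1
      · exfalso
        have htri := hT.isConnected.dist_triangle (u := u) (v := vbar) (w := p)
        omega
    -- l is a leaf
    have hlleaf : IsLeaf T l := by
      have hset : T.neighborSet l = {p} := by
        ext w'
        simp only [SimpleGraph.mem_neighborSet, Set.mem_singleton_iff]
        constructor
        · intro hw'
          rcases step hT u hw' with h1 | h2
          · exact pred_unique hT hw'.symm hpadj h1 hpu
          · rcases step hT vbar hw' with h3 | h4
            · have := pred_unique hT hw'.symm hpadj h3 hpd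
              subst this
              omega
            · exfalso
              have hw'S : w' ∈ S := by simp [hS]; omega
              have := hlmax w' hw'S
              omega
        · rintro rfl
          exact hpadj.symm
      rw [IsLeaf, hset, Set.ncard_singleton]
    -- conclude
    have hlr : r ≤ T.dist vbar l := by
      rcases hbal l hlleaf with h | h <;> omega
    have huvbar1 : 1 ≤ T.dist u vbar := hT.isConnected.pos_dist_of_ne huv
    have := dist_le_eccent (T := T) u l
    omega
end

section
/- Let T be a finite tree and let (G_1 ⊆ G_2 ⊆ ... ⊆ G_N = T) be an increasing sequence of subtrees of T where G_1 is a single vertex and G_{n+1} is obtained from G_n by adding one vertex of T adjacent to G_n. Let c_n be any centroid of G_n. Then for all n, dist(c_n, c_{n+1}) ≤ 1 in T. -/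
set_option linter.unusedSectionVars false
set_option linter.unusedVariables false
set_option maxHeartbeats 1000000

open SimpleGraph


noncomputable def delCompSize {V : Type*} (G : SimpleGraph V) (c : V)
    (K : (G.induce {v | v ≠ c}).ConnectedComponent) : ℕ :=
  Nat.card {x : {v // v ≠ c} // (G.induce {v | v ≠ c}).connectedComponentMk x = K}

noncomputable def maxCompSize {V : Type*} (G : SimpleGraph V) (c : V) : ℕ :=
  sSup (Set.range fun K => delCompSize G c K)

/-- `x` is a centroid of the subgraph of `G` induced on the finite vertex set `s`:
it minimizes, over vertices of `s`, the maximum size of the components obtained by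
deleting it from `G.induce s`. -/
def IsCentroidOn {V : Type*} (G : SimpleGraph V) (s : Finset V) (x : V) : Prop :=
  ∃ h : x ∈ s, ∀ y : (s : Set V),
    maxCompSize (G.induce (s : Set V)) ⟨x, h⟩ ≤ maxCompSize (G.induce (s : Set V)) y

namespace CentroidAux
variable {V : Type*} [DecidableEq V] {T : SimpleGraph V}

def ReachIn (T : SimpleGraph V) (t : Set V) (x y : V) : Prop :=
  ∃ p : T.Walk x y, ∀ z ∈ p.support, z ∈ t

def cmp (T : SimpleGraph V) (t : Set V) (x : V) : Set V := {y | ReachIn T t x y}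

noncomputable def f (T : SimpleGraph V) (s : Finset V) (c : V) : ℕ :=
  (s.erase c).sup fun x => (cmp T ((s : Set V) \ {c}) x).ncard

lemma ReachIn.mono {t t' : Set V} (h : t ⊆ t') {x y : V} (hr : ReachIn T t x y) :
    ReachIn T t' x y := by obtain ⟨p, hp⟩ := hr; exact ⟨p, fun z hz => h (hp z hz)⟩

lemma ReachIn.refl {t : Set V} {x : V} (hx : x ∈ t) : ReachIn T t x x :=
  ⟨Walk.nil, by simpa using hx⟩

lemma ReachIn.symm {t : Set V} {x y : V} (h : ReachIn T t x y) : ReachIn T t y x := by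
  obtain ⟨p, hp⟩ := h
  exact ⟨p.reverse, fun z hz => hp z (by simpa [Walk.support_reverse] using hz)⟩

lemma ReachIn.trans {t : Set V} {x y z : V} (h : ReachIn T t x y) (h' : ReachIn T t y z) :
    ReachIn T t x z := by
  obtain ⟨p, hp⟩ := h; obtain ⟨q, hq⟩ := h'
  refine ⟨p.append q, fun a ha => ?_⟩
  rw [Walk.mem_support_append_iff] at ha
  exact ha.elim (hp a) (hq a)

lemma ReachIn.left_mem {t : Set V} {x y : V} (h : ReachIn T t x y) : x ∈ t := by
  obtain ⟨p, hp⟩ := h; exact hp x p.start_mem_support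

lemma ReachIn.right_mem {t : Set V} {x y : V} (h : ReachIn T t x y) : y ∈ t := by
  obtain ⟨p, hp⟩ := h; exact hp y p.end_mem_support

lemma ReachIn.exists_path {t : Set V} {x y : V} (h : ReachIn T t x y) :
    ∃ p : T.Walk x y, p.IsPath ∧ ∀ z ∈ p.support, z ∈ t := by
  classical
  obtain ⟨p, hp⟩ := h
  exact ⟨p.bypass, p.bypass_isPath, fun z hz => hp z (p.support_bypass_subset hz)⟩

lemma cmp_eq_of_reachIn {t : Set V} {x y : V} (h : ReachIn T t x y) :
    cmp T t x = cmp T t y := by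
  ext z
  exact ⟨fun hz => h.symm.trans hz, fun hz => h.trans hz⟩

lemma mem_cmp_self {t : Set V} {x : V} (hx : x ∈ t) : x ∈ cmp T t x := ReachIn.refl hx

lemma cmp_subset {t : Set V} (x : V) : cmp T t x ⊆ t := fun _ h => ReachIn.right_mem h

lemma exists_walk_of_induce {W : Type*} {H : SimpleGraph W} {t : Set W} {x y : t}
    (p : (H.induce t).Walk x y) :
    ∃ q : H.Walk ↑x ↑y, q.support = p.support.map Subtype.val := by
  induction p with
  | nil => exact ⟨Walk.nil, by simp⟩
  | cons h p ih =>
    obtain ⟨q, hq⟩ := ih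
    exact ⟨Walk.cons (by simpa using h) q, by simp [hq]⟩

lemma exists_induce_walk {W : Type*} {H : SimpleGraph W} {t : Set W} {a b : W}
    (p : H.Walk a b) (hp : ∀ z ∈ p.support, z ∈ t) (ha : a ∈ t) (hb : b ∈ t) :
    ∃ q : (H.induce t).Walk ⟨a, ha⟩ ⟨b, hb⟩, q.support.map Subtype.val = p.support := by
  induction p with
  | nil => exact ⟨Walk.nil, by simp⟩
  | @cons a c b h p ih =>
    have hc : c ∈ t := hp c (by simp)
    obtain ⟨q, hq⟩ := ih (fun z hz => hp z (by simp [hz])) hc hb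
    exact ⟨Walk.cons (by simpa using h) q, by simp [hq]⟩

lemma reachIn_induce_iff {s : Set V} (u : Set s) (a b : s) :
    ReachIn (T.induce s) u a b ↔
      ReachIn T {v | ∃ h : v ∈ s, (⟨v, h⟩ : s) ∈ u} ↑a ↑b := by
  constructor
  · rintro ⟨q, hq⟩
    obtain ⟨p, hp⟩ := exists_walk_of_induce q
    refine ⟨p, fun z hz => ?_⟩
    rw [hp, List.mem_map] at hz
    obtain ⟨z', hz', rfl⟩ := hz
    exact ⟨z'.2, hq z' hz'⟩
  · rintro ⟨p, hp⟩
    have hsub : ∀ z ∈ p.support, z ∈ s := fun z hz => (hp z hz).1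
    obtain ⟨q, hq⟩ := exists_induce_walk p hsub a.2 b.2
    refine ⟨q, fun z hz => ?_⟩
    have hzp : (z : V) ∈ p.support := by
      rw [← hq]; exact List.mem_map_of_mem hz
    obtain ⟨h1, h2⟩ := hp _ hzp
    exact (Subtype.coe_eta z h1) ▸ h2

lemma reachable_induce_iff' {W : Type*} {H : SimpleGraph W} {t : Set W} (x y : t) :
    (H.induce t).Reachable x y ↔ ReachIn H t ↑x ↑y := by
  constructor
  · rintro ⟨p⟩
    obtain ⟨q, hq⟩ := exists_walk_of_induce p
    refine ⟨q, fun z hz => ?_⟩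
    rw [hq, List.mem_map] at hz
    obtain ⟨z', _, rfl⟩ := hz
    exact z'.2
  · rintro ⟨p, hp⟩
    obtain ⟨q, -⟩ := exists_induce_walk p hp x.2 y.2
    exact ⟨q⟩

lemma delCompSize_eq (s : Finset V) (c : (s : Set V))
    (x : {v : (s : Set V) // v ≠ c}) :
    delCompSize (T.induce (s : Set V)) c
      (((T.induce (s : Set V)).induce {v | v ≠ c}).connectedComponentMk x)
      = (cmp T ((s : Set V) \ {(c : V)}) ((x : (s : Set V)) : V)).ncard := by
  set t : Set V := (s : Set V) \ {(c : V)} with ht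
  have hset : {v | ∃ h : v ∈ (s : Set V), (⟨v, h⟩ : (s : Set V)) ∈ {v | v ≠ c}} = t := by
    ext v
    simp only [Set.mem_setOf_eq, ht, Set.mem_diff, Set.mem_singleton_iff]
    constructor
    · rintro ⟨h, hne⟩
      exact ⟨h, fun hvc => hne (Subtype.ext hvc)⟩
    · rintro ⟨h, hne⟩
      exact ⟨h, fun hh => hne (congrArg Subtype.val hh)⟩
  have key : ∀ z : {v : (s : Set V) // v ≠ c},
      ((((T.induce (s : Set V)).induce {v | v ≠ c}).connectedComponentMk z =
        ((T.induce (s : Set V)).induce {v | v ≠ c}).connectedComponentMk x)) ↔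
      ((z : (s : Set V)) : V) ∈ cmp T t ((x : (s : Set V)) : V) := by
    intro z
    rw [ConnectedComponent.eq, reachable_induce_iff', reachIn_induce_iff, hset]
    exact ⟨fun h => h.symm, fun h => ReachIn.symm h⟩
  rw [delCompSize, ← Nat.card_coe_set_eq]
  apply Nat.card_congr
  refine Equiv.ofBijective (fun z => ⟨((z.1 : (s : Set V)) : V), (key z.1).mp z.2⟩) ⟨?_, ?_⟩
  · intro a b hab
    simp only [Subtype.mk.injEq] at hab
    exact Subtype.ext (Subtype.ext (Subtype.ext hab))
  · rintro ⟨y, hy⟩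
    have hyt : y ∈ t := ReachIn.right_mem hy
    refine ⟨⟨⟨⟨y, hyt.1⟩, fun h => hyt.2 (congrArg Subtype.val h)⟩, (key _).mpr hy⟩, rfl⟩

lemma maxCompSize_eq (s : Finset V) (c : V) (hc : c ∈ s) :
    maxCompSize (T.induce (s : Set V)) ⟨c, hc⟩ = f T s c := by
  have hbdd : BddAbove (Set.range fun K => delCompSize (T.induce (s : Set V)) (⟨c, hc⟩ : (s : Set V)) K) := by
    refine ⟨(s : Set V).ncard, ?_⟩
    rintro _ ⟨K, rfl⟩
    obtain ⟨z, rfl⟩ := K.exists_rep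
    refine le_of_eq_of_le (delCompSize_eq s ⟨c, hc⟩ z) ?_
    exact Set.ncard_le_ncard (fun y hy => (ReachIn.right_mem hy).1) (s : Set V).toFinite
  apply le_antisymm
  · apply csSup_le'
    rintro _ ⟨K, rfl⟩
    obtain ⟨z, rfl⟩ := K.exists_rep
    have hz : ((z : (s : Set V)) : V) ∈ s.erase c := by
      rw [Finset.mem_erase]
      exact ⟨fun h => z.2 (Subtype.ext h), ((z : (s : Set V))).2⟩
    exact le_of_eq_of_le (delCompSize_eq s ⟨c, hc⟩ z)
      (Finset.le_sup (f := fun x => (cmp T ((s : Set V) \ {c}) x).ncard) hz)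
  · apply Finset.sup_le
    intro x hx
    rw [Finset.mem_erase] at hx
    have hxs : x ∈ (s : Set V) := hx.2
    set z : {v : (s : Set V) // v ≠ (⟨c, hc⟩ : (s : Set V))} :=
      ⟨⟨x, hxs⟩, fun h => hx.1 (congrArg Subtype.val h)⟩ with hz
    have := delCompSize_eq (T := T) s ⟨c, hc⟩ z
    rw [← this]
    exact le_csSup hbdd ⟨_, rfl⟩

lemma maxCompSize_eq' (s : Finset V) (c : (s : Set V)) :
    maxCompSize (T.induce (s : Set V)) c = f T s ↑c :=
  maxCompSize_eq s (↑c) c.2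

lemma isCentroidOn_iff (s : Finset V) (c : V) :
    IsCentroidOn T s c ↔ c ∈ s ∧ ∀ y ∈ s, f T s c ≤ f T s y := by
  constructor
  · rintro ⟨hc, hmin⟩
    refine ⟨hc, fun y hy => ?_⟩
    have := hmin ⟨y, hy⟩
    rwa [maxCompSize_eq' s, maxCompSize_eq' s] at this
  · rintro ⟨hc, hmin⟩
    refine ⟨hc, fun y => ?_⟩
    rw [maxCompSize_eq' s, maxCompSize_eq' s]
    exact hmin (↑y) y.2

lemma takeUntil_not_mem_end {x y u : V} (p : T.Walk x y) (hp : p.IsPath)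
    (hu : u ∈ p.support) (hne : u ≠ y) : y ∉ (p.takeUntil u hu).support := by
  intro hy
  have hnd := hp.support_nodup
  rw [← Walk.take_spec p hu, Walk.support_append] at hnd
  have hdisj := List.disjoint_of_nodup_append hnd
  have hytail : y ∈ (p.dropUntil u hu).support.tail := by
    have h := (p.dropUntil u hu).end_mem_support
    rw [Walk.support_eq_cons] at h
    rcases List.mem_cons.mp h with h | h
    · exact absurd h.symm hne
    · exact h
  exact hdisj hy hytail

lemma concat_isPath {x y w : V} (p : T.Walk x y) (hp : p.IsPath) (h : T.Adj y w)
    (hw : w ∉ p.support) : (p.concat h).IsPath := by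
  rw [Walk.isPath_def, Walk.support_concat]
  exact List.Nodup.append hp.support_nodup (List.nodup_singleton w)
    (by simpa [List.disjoint_singleton] using hw)

lemma walk_eq_of_isTree (hT : T.IsTree) {x y : V} (p q : T.Walk x y)
    (hp : p.IsPath) (hq : q.IsPath) : p = q :=
  congrArg Subtype.val (hT.IsAcyclic.path_unique ⟨p, hp⟩ ⟨q, hq⟩)

lemma unique_nbr (hT : T.IsTree) {s : Finset V}
    (hconn : ∀ x ∈ s, ∀ y ∈ s, ReachIn T ↑s x y) {w : V} (hw : w ∉ s)
    {z1 z2 : V} (h1 : z1 ∈ s) (h2 : z2 ∈ s) (a1 : T.Adj z1 w) (a2 : T.Adj z2 w) :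
    z1 = z2 := by
  by_contra hne
  obtain ⟨P, hP, hPs⟩ := (hconn z1 h1 z2 h2).exists_path
  have hwP : w ∉ P.support := fun h => hw (hPs w h)
  have heq := walk_eq_of_isTree hT (P.concat a2) (Walk.cons a1 Walk.nil)
    (concat_isPath P hP a2 hwP) (by simp [Walk.isPath_def, a1.ne])
  have hz2 : z2 ∈ (P.concat a2).support := by
    rw [Walk.support_concat]
    exact List.mem_append_left _ P.end_mem_support
  rw [heq] at hz2
  simp only [Walk.support_cons, Walk.support_nil, List.mem_cons, List.mem_singleton] at hz2
  rcases hz2 with h | h | h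
  · exact hne h.symm
  · exact hw (h ▸ h2)
  · exact (List.not_mem_nil h).elim

lemma avoid_w (hT : T.IsTree) {s : Finset V}
    (hconn : ∀ x ∈ s, ∀ y ∈ s, ReachIn T ↑s x y) {w u0 : V} (hw : w ∉ s)
    (hu0 : u0 ∈ s) (hadj : T.Adj u0 w) {a b : V} (p : T.Walk a b) (hp : p.IsPath)
    (hsup : ∀ z ∈ p.support, z ∈ insert w (s : Set V)) (ha : a ≠ w) (hb : b ≠ w) :
    ∀ z ∈ p.support, z ∈ s := by
  have hwp : w ∉ p.support := by
    intro hwp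
    set p1 := p.takeUntil w hwp with hp1def
    set p2 := p.dropUntil w hwp with hp2def
    have hp1 : p1.IsPath := hp.takeUntil hwp
    have hnd := hp.support_nodup
    rw [← Walk.take_spec p hwp, Walk.support_append] at hnd
    have hdisj := List.disjoint_of_nodup_append hnd
    obtain ⟨c1, h1, r1, hq1⟩ := Walk.exists_eq_cons_of_ne (Ne.symm ha) p1.reverse
    obtain ⟨c2, h2, r2, hq2⟩ := Walk.exists_eq_cons_of_ne (Ne.symm hb) p2
    have hc1p1 : c1 ∈ p1.support := by
      rw [← List.mem_reverse, ← Walk.support_reverse, hq1, Walk.support_cons]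
      exact List.mem_cons_of_mem _ r1.start_mem_support
    have hc2p2 : c2 ∈ p2.support.tail := by
      rw [hq2, Walk.support_cons]
      exact r2.start_mem_support
    have hc1s : c1 ∈ s := by
      rcases hsup c1 (p.support_takeUntil_subset hwp hc1p1) with h | h
      · exact absurd h h1.ne'
      · exact h
    have hc2s : c2 ∈ s := by
      rcases hsup c2 (p.support_dropUntil_subset hwp (List.mem_of_mem_tail hc2p2)) with h | h
      · exact absurd h h2.ne'
      · exact h
    have hcc : c1 = c2 := unique_nbr hT hconn hw hc1s hc2s h1.symm h2.symm
    exact hdisj hc1p1 (hcc ▸ hc2p2)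
  intro z hz
  rcases hsup z hz with h | h
  · exact absurd (h ▸ hz) hwp
  · exact h

lemma f_insert_le (hT : T.IsTree) {s : Finset V}
    (hconn : ∀ x ∈ s, ∀ y ∈ s, ReachIn T ↑s x y) {w u0 : V} (hw : w ∉ s)
    (hu0 : u0 ∈ s) (hadj : T.Adj u0 w) {c : V} (hc : c ∈ s) :
    f T (insert w s) c ≤ f T s c + 1 := by
  have hset : ((insert w s : Finset V) : Set V) = insert w (s : Set V) := by
    simp
  have key : ∀ x ∈ s, x ≠ c →
      (cmp T (((insert w s : Finset V) : Set V) \ {c}) x).ncard ≤ f T s c + 1 := by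
    intro x hx hxc
    have hsub : cmp T (((insert w s : Finset V) : Set V) \ {c}) x ⊆
        insert w (cmp T ((s : Set V) \ {c}) x) := by
      intro z hz
      by_cases hzw : z = w
      · exact hzw ▸ Set.mem_insert _ _
      · obtain ⟨p, hp, hps⟩ := ReachIn.exists_path hz
        have hps' : ∀ a ∈ p.support, a ∈ insert w (s : Set V) := by
          intro a ha2
          have := hps a ha2
          rw [hset] at this
          exact this.1
        have hxw : x ≠ w := fun h => hw (h ▸ hx)
        have hins : ∀ a ∈ p.support, a ∈ s := avoid_w hT hconn hw hu0 hadj p hp hps' hxw hzw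
        refine Set.mem_insert_of_mem _ ⟨p, fun a ha2 => ⟨hins a ha2, (hps a ha2).2⟩⟩
    calc (cmp T (((insert w s : Finset V) : Set V) \ {c}) x).ncard
        ≤ (insert w (cmp T ((s : Set V) \ {c}) x)).ncard :=
          Set.ncard_le_ncard hsub (Set.Finite.insert _ ((s : Set V).toFinite.subset
            (fun a ha => (ReachIn.right_mem ha).1)))
      _ ≤ (cmp T ((s : Set V) \ {c}) x).ncard + 1 := Set.ncard_insert_le _ _
      _ ≤ f T s c + 1 := by
          have : x ∈ s.erase c := Finset.mem_erase.mpr ⟨hxc, hx⟩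
          exact Nat.add_le_add_right
            (Finset.le_sup (f := fun x => (cmp T ((s : Set V) \ {c}) x).ncard) this) 1
  apply Finset.sup_le
  intro x hx
  rw [Finset.mem_erase, Finset.mem_insert] at hx
  obtain ⟨hxc, hx⟩ := hx
  rcases hx with rfl | hx
  · -- x = w
    by_cases hu0c : u0 = c
    · -- the new vertex is attached to c: its component is just {x}
      have hsub : cmp T (((insert x s : Finset V) : Set V) \ {c}) x ⊆ {x} := by
        intro z hz
        by_contra hzx
        obtain ⟨p, hp, hps⟩ := ReachIn.exists_path hz
        obtain ⟨c1, h1, r1, hq1⟩ := Walk.exists_eq_cons_of_ne (Ne.symm hzx) p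
        have hc1 : c1 ∈ p.support := by
          rw [hq1, Walk.support_cons]; exact List.mem_cons_of_mem _ r1.start_mem_support
        have := hps c1 hc1
        rw [hset] at this
        rcases this.1 with h | h
        · exact h1.ne' h
        · exact this.2 (unique_nbr hT hconn hw h hu0 h1.symm hadj ▸ hu0c)
      calc (cmp T (((insert x s : Finset V) : Set V) \ {c}) x).ncard
          ≤ ({x} : Set V).ncard := Set.ncard_le_ncard hsub (Set.finite_singleton x)
        _ ≤ f T s c + 1 := by simp
    · have hx0 : ReachIn T (((insert x s : Finset V) : Set V) \ {c}) x u0 := by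
        refine ⟨Walk.cons hadj.symm Walk.nil, ?_⟩
        intro z hz
        simp only [Walk.support_cons, Walk.support_nil, List.mem_cons,
          List.mem_singleton] at hz
        rw [hset]
        rcases hz with rfl | rfl | hh
        · exact ⟨Set.mem_insert _ _, hxc⟩
        · exact ⟨Set.mem_insert_of_mem _ hu0, hu0c⟩
        · exact (List.not_mem_nil hh).elim
      rw [cmp_eq_of_reachIn hx0]
      exact key u0 hu0 hu0c
  · exact key x hx hxc

lemma far_sum {s : Finset V}
    (hconn : ∀ x ∈ s, ∀ y ∈ s, ReachIn T ↑s x y) {u v : V} (hu : u ∈ s) (hv : v ∈ s)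
    (hne : u ≠ v) (hnadj : ¬T.Adj u v) : s.card + 1 ≤ f T s u + f T s v := by
  obtain ⟨p, hp, hps⟩ := (hconn u hu v hv).exists_path
  obtain ⟨a, h, q, rfl⟩ := Walk.exists_eq_cons_of_ne hne p
  have hav : a ≠ v := fun hh => hnadj (hh ▸ h)
  have hau : a ≠ u := h.ne'
  have hqs : ∀ z ∈ q.support, z ∈ s := fun z hz => hps z (by
    rw [Walk.support_cons]; exact List.mem_cons_of_mem _ hz)
  have huq : u ∉ q.support := by
    have := hp.support_nodup
    rw [Walk.support_cons, List.nodup_cons] at this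
    exact this.1
  set tu : Set V := (s : Set V) \ {u} with htu
  set tv : Set V := (s : Set V) \ {v} with htv
  have ha1 : a ∈ cmp T tu v := by
    refine ReachIn.symm ⟨q, fun z hz => ⟨hqs z hz, fun hzu => huq (hzu ▸ hz)⟩⟩
  have ha2 : a ∈ cmp T tv u :=
    ⟨Walk.cons h Walk.nil, by
      intro z hz
      simp only [Walk.support_cons, Walk.support_nil, List.mem_cons, List.mem_singleton] at hz
      rcases hz with rfl | rfl | hh
      · exact ⟨hu, hne⟩
      · exact ⟨hqs _ q.start_mem_support, hav⟩
      · exact (List.not_mem_nil hh).elim⟩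
  have hfin1 : (cmp T tu v).Finite := (s : Set V).toFinite.subset
    (fun z hz => (ReachIn.right_mem hz).1)
  have hfin2 : (cmp T tv u).Finite := (s : Set V).toFinite.subset
    (fun z hz => (ReachIn.right_mem hz).1)
  have hcover : (s : Set V) ⊆ cmp T tu v ∪ cmp T tv u := by
    intro z hz
    by_cases hzu : z = u
    · subst hzu
      exact Set.mem_union_right _ (ReachIn.refl ⟨hu, hne⟩)
    by_cases hzv : z = v
    · subst hzv
      exact Set.mem_union_left _ (ReachIn.refl ⟨hv, Ne.symm hne⟩)
    obtain ⟨r, hr, hrs⟩ := (hconn z hz u hu).exists_path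
    by_cases hvr : v ∈ r.support
    · have hunr := takeUntil_not_mem_end r hr hvr (Ne.symm hne)
      refine Set.mem_union_left _ (ReachIn.symm ⟨r.takeUntil v hvr, fun b hb => ?_⟩)
      exact ⟨hrs b (r.support_takeUntil_subset hvr hb), fun hbu => hunr (hbu ▸ hb)⟩
    · refine Set.mem_union_right _ (ReachIn.symm ⟨r, fun b hb => ?_⟩)
      exact ⟨hrs b hb, fun hbv => hvr (hbv ▸ hb)⟩
  have hcount := Set.ncard_union_add_ncard_inter (cmp T tu v) (cmp T tv u) hfin1 hfin2
  have hun : s.card ≤ (cmp T tu v ∪ cmp T tv u).ncard := by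
    calc s.card = (s : Set V).ncard := (Set.ncard_coe_finset s).symm
      _ ≤ _ := Set.ncard_le_ncard hcover (hfin1.union hfin2)
  have hin : 1 ≤ (cmp T tu v ∩ cmp T tv u).ncard := by
    rw [Nat.one_le_iff_ne_zero, ← Nat.pos_iff_ne_zero]
    exact (Set.ncard_pos (hfin1.inter_of_left _)).mpr ⟨a, ha1, ha2⟩
  have hb1 : (cmp T tu v).ncard ≤ f T s u :=
    Finset.le_sup (f := fun x => (cmp T ((s : Set V) \ {u}) x).ncard)
      (Finset.mem_erase.mpr ⟨Ne.symm hne, hv⟩)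
  have hb2 : (cmp T tv u).ncard ≤ f T s v :=
    Finset.le_sup (f := fun x => (cmp T ((s : Set V) \ {v}) x).ncard)
      (Finset.mem_erase.mpr ⟨hne, hu⟩)
  omega

lemma centroid_half (hT : T.IsTree) {s : Finset V}
    (hconn : ∀ x ∈ s, ∀ y ∈ s, ReachIn T ↑s x y) {c : V} (hc : c ∈ s)
    (hmin : ∀ y ∈ s, f T s c ≤ f T s y) : 2 * f T s c ≤ s.card := by
  by_contra hbig
  push_neg at hbig
  have hfpos : 0 < f T s c := by omega
  have hne : (s.erase c).Nonempty := by
    rcases Finset.eq_empty_or_nonempty (s.erase c) with h | h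
    · rw [f, h] at hfpos; simp at hfpos
    · exact h
  obtain ⟨x, hx, hfx⟩ := Finset.exists_mem_eq_sup (s.erase c) hne
    (fun x => (cmp T ((s : Set V) \ {c}) x).ncard)
  rw [Finset.mem_erase] at hx
  set t : Set V := (s : Set V) \ {c} with htdef
  set C : Set V := cmp T t x with hCdef
  have hCfin : C.Finite := (s : Set V).toFinite.subset (fun z hz => (ReachIn.right_mem hz).1)
  have hCsub : C ⊆ (s : Set V) := fun z hz => (ReachIn.right_mem hz).1
  have hxC : x ∈ C := ReachIn.refl ⟨hx.2, hx.1⟩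
  -- find the neighbor u of c inside C
  obtain ⟨P, hP, hPs⟩ := (hconn c hc x hx.2).exists_path
  obtain ⟨u, h, q, rfl⟩ := Walk.exists_eq_cons_of_ne (Ne.symm hx.1) P
  have hus : u ∈ s := by
    refine hPs u ?_
    rw [Walk.support_cons]
    exact List.mem_cons_of_mem _ q.start_mem_support
  have huc : u ≠ c := h.ne'
  have hcq : c ∉ q.support := by
    have := hP.support_nodup
    rw [Walk.support_cons, List.nodup_cons] at this
    exact this.1
  have hux : ReachIn T t u x := ⟨q, fun z hz =>
    ⟨hPs z (by rw [Walk.support_cons]; exact List.mem_cons_of_mem _ hz),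
     fun hzc => hcq (hzc ▸ hz)⟩⟩
  have huC : u ∈ C := ReachIn.symm hux
  have hCu : cmp T t u = C := cmp_eq_of_reachIn hux
  set tu : Set V := (s : Set V) \ {u} with htudef
  -- (i) the component of c in s - u is disjoint from C
  have hdisj : ∀ z ∈ cmp T tu c, z ∉ C := by
    intro z h1 h2
    obtain ⟨r1, hr1, hr1s⟩ := ReachIn.exists_path h1
    rw [← hCu] at h2
    obtain ⟨r2, hr2, hr2s⟩ := ReachIn.exists_path h2
    have hP2 : (Walk.cons h r2).IsPath := hr2.cons (fun hcs => (hr2s c hcs).2 rfl)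
    have heq := walk_eq_of_isTree hT r1 (Walk.cons h r2) hr1 hP2
    have hur1 : u ∉ r1.support := fun hh => (hr1s u hh).2 rfl
    rw [heq, Walk.support_cons] at hur1
    exact hur1 (List.mem_cons_of_mem _ r2.start_mem_support)
  -- (ii)+(iii): every component of s - u is small
  have hsmall : ∀ y ∈ s.erase u,
      (cmp T tu y).ncard ≤ max (s.card - C.ncard) (C.ncard - 1) := by
    intro y hy
    rw [Finset.mem_erase] at hy
    by_cases hcy : c ∈ cmp T tu y
    · rw [cmp_eq_of_reachIn (show ReachIn T tu y c from hcy)]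
      have hsub : cmp T tu c ⊆ (s : Set V) \ C := fun z hz =>
        ⟨(ReachIn.right_mem hz).1, hdisj z hz⟩
      calc (cmp T tu c).ncard ≤ ((s : Set V) \ C).ncard :=
            Set.ncard_le_ncard hsub ((s : Set V).toFinite.diff)
        _ = s.card - C.ncard := by
            rw [Set.ncard_diff hCsub hCfin, Set.ncard_coe_finset]
        _ ≤ _ := le_max_left _ _
    · have hS : ∀ z ∈ cmp T tu y, z ∈ C := by
        intro z hz
        have hzy : cmp T tu z = cmp T tu y := cmp_eq_of_reachIn (ReachIn.symm hz)
        have hcz : c ∉ cmp T tu z := hzy ▸ hcy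
        have hzs : z ∈ s := (ReachIn.right_mem hz).1
        have hzu : z ≠ u := (ReachIn.right_mem hz).2
        have hzc : z ≠ c := by
          rintro rfl
          exact hcz (ReachIn.refl ⟨hc, huc.symm⟩)
        obtain ⟨r, hr, hrs⟩ := (hconn z hzs c hc).exists_path
        have hur : u ∈ r.support := by
          by_contra hur
          exact hcz ⟨r, fun b hb => ⟨hrs b hb, fun hbu => hur (hbu ▸ hb)⟩⟩
        have hcpre := takeUntil_not_mem_end r hr hur huc
        have hzu' : ReachIn T t z u := ⟨r.takeUntil u hur, fun b hb =>
          ⟨hrs b (r.support_takeUntil_subset hur hb), fun hbc => hcpre (hbc ▸ hb)⟩⟩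
        rw [← hCu]
        exact ReachIn.symm hzu'
      have hsub : cmp T tu y ⊆ C \ {u} := fun z hz =>
        ⟨hS z hz, (ReachIn.right_mem hz).2⟩
      calc (cmp T tu y).ncard ≤ (C \ {u}).ncard :=
            Set.ncard_le_ncard hsub (hCfin.diff)
        _ = C.ncard - 1 := by rw [Set.ncard_diff_singleton_of_mem huC]
        _ ≤ _ := le_max_right _ _
  have hfu : f T s u ≤ max (s.card - C.ncard) (C.ncard - 1) := Finset.sup_le hsmall
  have hmin' := hmin u hus
  have hfc : f T s c = C.ncard := hfx
  have hCcard : C.ncard ≤ s.card := by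
    rw [← Set.ncard_coe_finset s]; exact Set.ncard_le_ncard hCsub (s : Set V).toFinite
  have hCpos : 0 < C.ncard := (Set.ncard_pos hCfin).mpr ⟨x, hxC⟩
  rcases le_max_iff.mp (le_trans hmin' hfu) with hcase | hcase <;> omega

end CentroidAux

/-- Let `T` be a finite tree and `G_1 ⊆ ⋯ ⊆ G_N = T` an increasing sequence of subtrees,
where `G_1` is a single vertex and `G_{n+1}` is obtained from `G_n` by adding one vertex
adjacent to `G_n`.  If `c_n` is any centroid of `G_n`, then `dist_T(c_n, c_{n+1}) ≤ 1`. -/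
theorem growing_subtree_centroid_moves_le_one {V : Type*} [Fintype V] [DecidableEq V]
    (T : SimpleGraph V) (hT : T.IsTree) (N : ℕ) (hN : 1 ≤ N)
    (A : ℕ → Finset V)
    (hA1 : ∃ x : V, A 1 = {x})
    (hgrow : ∀ n, 1 ≤ n → n < N →
      ∃ w : V, w ∉ A n ∧ (∃ u ∈ A n, T.Adj u w) ∧ A (n + 1) = insert w (A n))
    (hAN : A N = Finset.univ) :
    ∀ c : ℕ → V, (∀ n, 1 ≤ n → n ≤ N → IsCentroidOn T (A n) (c n)) →
      ∀ n, 1 ≤ n → n < N → T.dist (c n) (c (n + 1)) ≤ 1 := by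
  intro c hcent n hn1 hnN
  have hconn : ∀ k, 1 ≤ k → k ≤ N →
      ∀ x ∈ A k, ∀ y ∈ A k, CentroidAux.ReachIn T ↑(A k) x y := by
    intro k hk1 hkN
    induction k with
    | zero => omega
    | succ k ih =>
      rcases Nat.lt_or_ge 0 k with hk | hk
      · obtain ⟨w, hw, ⟨u, hu, huw⟩, heq⟩ := hgrow k hk (by omega)
        have hIH := ih hk (by omega)
        rw [heq]
        have hmono : (↑(A k) : Set V) ⊆ ↑(insert w (A k)) := by
          intro z hz
          simp only [Finset.coe_insert, Set.mem_insert_iff]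
          exact Or.inr hz
        have hwu : CentroidAux.ReachIn T ↑(insert w (A k)) w u := by
          refine ⟨SimpleGraph.Walk.cons huw.symm SimpleGraph.Walk.nil, ?_⟩
          intro z hz
          simp only [SimpleGraph.Walk.support_cons, SimpleGraph.Walk.support_nil,
            List.mem_cons, List.mem_singleton] at hz
          rcases hz with rfl | rfl | hh
          · exact Finset.mem_coe.mpr (Finset.mem_insert_self _ _)
          · exact Finset.mem_coe.mpr (Finset.mem_insert_of_mem hu)
          · exact (List.not_mem_nil hh).elim
        intro x hx y hy
        rw [Finset.mem_insert] at hx hy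
        rcases hx with rfl | hx <;> rcases hy with rfl | hy
        · exact CentroidAux.ReachIn.refl (Finset.mem_coe.mpr (Finset.mem_insert_self _ _))
        · exact hwu.trans ((hIH u hu y hy).mono hmono)
        · exact (((hIH x hx u hu).mono hmono).trans hwu.symm)
        · exact (hIH x hx y hy).mono hmono
      · interval_cases k
        obtain ⟨x0, hx0⟩ := hA1
        rw [hx0]
        intro x hx y hy
        simp only [Finset.mem_singleton] at hx hy
        subst hx; subst hy
        exact CentroidAux.ReachIn.refl (by simp [hx0])
  obtain ⟨hcs, hmin_s⟩ := (CentroidAux.isCentroidOn_iff (A n) (c n)).mp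
    (hcent n hn1 (le_of_lt hnN))
  obtain ⟨hcs', hmin_s'⟩ := (CentroidAux.isCentroidOn_iff (A (n+1)) (c (n+1))).mp
    (hcent (n+1) (by omega) hnN)
  by_cases h0 : c n = c (n + 1)
  · rw [h0, SimpleGraph.dist_self]
    omega
  by_cases h1 : T.Adj (c n) (c (n + 1))
  · refine le_trans (SimpleGraph.dist_le (SimpleGraph.Walk.cons h1 SimpleGraph.Walk.nil)) ?_
    simp
  exfalso
  obtain ⟨w, hw, ⟨u, hu, huw⟩, heq⟩ := hgrow n hn1 hnN
  have hconn_s := hconn n hn1 (le_of_lt hnN)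
  have hconn_s' := hconn (n+1) (by omega) hnN
  have h2 : 2 * CentroidAux.f T (A n) (c n) ≤ (A n).card :=
    CentroidAux.centroid_half hT hconn_s hcs hmin_s
  have h3 : 2 * CentroidAux.f T (A (n+1)) (c (n+1)) ≤ (A (n+1)).card :=
    CentroidAux.centroid_half hT hconn_s' hcs' hmin_s'
  have h4 : CentroidAux.f T (A (n+1)) (c n) ≤ CentroidAux.f T (A n) (c n) + 1 := by
    rw [heq]
    exact CentroidAux.f_insert_le hT hconn_s hw hu huw hcs
  have hcn1 : c n ∈ A (n+1) := by rw [heq]; exact Finset.mem_insert_of_mem hcs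
  have h5 : CentroidAux.f T (A (n+1)) (c (n+1)) ≤ CentroidAux.f T (A (n+1)) (c n) :=
    hmin_s' (c n) hcn1
  have h6 : (A (n+1)).card + 1 ≤
      CentroidAux.f T (A (n+1)) (c n) + CentroidAux.f T (A (n+1)) (c (n+1)) :=
    CentroidAux.far_sum hconn_s' hcn1 hcs' h0 h1
  have h7 : (A (n+1)).card = (A n).card + 1 := by
    rw [heq]
    exact Finset.card_insert_of_notMem hw
  omega
end
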